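/- There exists a constant C ∈ (1,∞) such that for all m, n, k ∈ ℕ: P(τ_k^{(m)} ≥ n) ≤ ( min( C·k·m/(n·(log m + 1)), 1) )^{n/m}, where the exponent n/m is a real exponent and P(τ_k^{(m)} ≥ n) := Σ_{j≥n} P(τ_k^{(m)} = j). -/

import Mathlib

open Filter MeasureTheory Real
open scoped Classical Topology

/-- `R_N := Σ_{n=1}^N r(n)`. -/
noncomputable def RR (r : ℕ → ℝ) (N : ℕ) : ℝ := ∑ n ∈ Finset.Icc 1 N, r n

/-- `P(τ_k^{(N)} = n)` for the renewal process with increment law `r(·)/R_N` on `{1,…,N}`: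
for `k ≥ 1` it is `R_N^{-k} Σ_{(n_1,…,n_k) ∈ {1,…,N}^k, n_1+⋯+n_k=n} Π_i r(n_i)`,
and for `k = 0` it is `1_{n=0}`. -/
noncomputable def tauP (r : ℕ → ℝ) (N k n : ℕ) : ℝ :=
  if k = 0 then (if n = 0 then 1 else 0)
  else (RR r N)⁻¹ ^ k *
    ∑ f ∈ (Fintype.piFinset fun _ : Fin k => Finset.Icc 1 N).filter
        (fun f => ∑ i, f i = n),
      ∏ i, r (f i)

/-- `P(τ_k^{(m)} ≥ n) := Σ_{j ≥ n} P(τ_k^{(m)} = j)`. -/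
noncomputable def tauTail (r : ℕ → ℝ) (m k n : ℕ) : ℝ :=
  ∑' j : ℕ, if n ≤ j then tauP r m k j else 0

lemma RR_pos (r : ℕ → ℝ) (hr : ∀ n, 0 < r n) {m : ℕ} (hm : 1 ≤ m) : 0 < RR r m :=
  Finset.sum_pos (fun i _ => hr i) ⟨1, Finset.mem_Icc.2 ⟨le_refl 1, hm⟩⟩

lemma tauP_nonneg (r : ℕ → ℝ) (hr : ∀ n, 0 < r n) (m k n : ℕ) : 0 ≤ tauP r m k n := by
  unfold tauP
  split_ifs with h1 h2
  · norm_num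
  · norm_num
  · refine mul_nonneg (pow_nonneg (inv_nonneg.2 ?_) _) ?_
    · exact Finset.sum_nonneg fun i _ => (hr i).le
    · exact Finset.sum_nonneg fun f _ => Finset.prod_nonneg fun i _ => (hr _).le

lemma tauP_eq_zero (r : ℕ → ℝ) {m k j : ℕ} (hk : k ≠ 0) (hj : k * m < j) :
    tauP r m k j = 0 := by
  unfold tauP
  rw [if_neg hk, Finset.filter_false_of_mem, Finset.sum_empty, mul_zero]
  intro f hf hsum
  have hle : ∑ i, f i ≤ k * m := by
    calc ∑ i, f i ≤ ∑ _i : Fin k, m :=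
          Finset.sum_le_sum fun i _ =>
            (Finset.mem_Icc.1 (Fintype.mem_piFinset.1 hf i)).2
      _ = k * m := by simp [Finset.sum_const, mul_comm]
  omega

lemma mgf_eq (r : ℕ → ℝ) (m k : ℕ) (hk : k ≠ 0) (l : ℝ) :
    ∑ j ∈ Finset.range (k * m + 1), tauP r m k j * Real.exp (l * j)
      = ((RR r m)⁻¹ * ∑ j ∈ Finset.Icc 1 m, r j * Real.exp (l * j)) ^ k := by
  have hmap : ∀ f ∈ Fintype.piFinset fun _ : Fin k => Finset.Icc 1 m,
      (∑ i, f i) ∈ Finset.range (k * m + 1) := by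
    intro f hf
    rw [Finset.mem_range]
    have : ∑ i, f i ≤ k * m := by
      calc ∑ i, f i ≤ ∑ _i : Fin k, m :=
            Finset.sum_le_sum fun i _ =>
              (Finset.mem_Icc.1 (Fintype.mem_piFinset.1 hf i)).2
        _ = k * m := by simp [Finset.sum_const, mul_comm]
    omega
  calc ∑ j ∈ Finset.range (k * m + 1), tauP r m k j * Real.exp (l * j)
      = (RR r m)⁻¹ ^ k * ∑ j ∈ Finset.range (k * m + 1),
          ∑ f ∈ (Fintype.piFinset fun _ : Fin k => Finset.Icc 1 m).filter
            (fun f => ∑ i, f i = j), (∏ i, r (f i)) * Real.exp (l * j) := by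
        simp only [tauP, if_neg hk, Finset.mul_sum, Finset.sum_mul, mul_assoc]
    _ = (RR r m)⁻¹ ^ k * ∑ f ∈ Fintype.piFinset fun _ : Fin k => Finset.Icc 1 m,
          ∏ i, (r (f i) * Real.exp (l * (f i : ℝ))) := by
        congr 1
        rw [← Finset.sum_fiberwise_of_maps_to hmap
          (fun f => ∏ i, (r (f i) * Real.exp (l * (f i : ℝ))))]
        refine Finset.sum_congr rfl fun j _ => Finset.sum_congr rfl fun f hf => ?_
        have hsum : ∑ i, f i = j := (Finset.mem_filter.1 hf).2
        rw [Finset.prod_mul_distrib, ← Real.exp_sum, ← Finset.mul_sum, ← hsum]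
        push_cast
        ring_nf
    _ = ((RR r m)⁻¹ * ∑ j ∈ Finset.Icc 1 m, r j * Real.exp (l * j)) ^ k := by
        rw [mul_pow]
        congr 1
        rw [show (∑ j ∈ Finset.Icc 1 m, r j * Real.exp (l * j)) ^ k
            = ∏ _i : Fin k, ∑ j ∈ Finset.Icc 1 m, r j * Real.exp (l * j) by simp,
          Finset.prod_univ_sum]

lemma exp_mul_le_aux {t x : ℝ} (hx0 : 0 ≤ x) (hx1 : x ≤ 1) :
    Real.exp (t * x) ≤ 1 + (Real.exp t - 1) * x := by
  have h := convexOn_exp.2 (Set.mem_univ (0:ℝ)) (Set.mem_univ t)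
    (by linarith : (0:ℝ) ≤ 1 - x) hx0 (by ring)
  simp only [smul_eq_mul, mul_zero, zero_add, Real.exp_zero] at h
  calc Real.exp (t * x) = Real.exp (x * t) := by rw [mul_comm]
    _ ≤ (1 - x) * 1 + x * Real.exp t := h
    _ = 1 + (Real.exp t - 1) * x := by ring

lemma chernoff (r : ℕ → ℝ) (hr : ∀ n, 0 < r n) (m k n : ℕ) (hm : 1 ≤ m) (hk : k ≠ 0)
    (t : ℝ) (ht : 0 ≤ t) :
    tauTail r m k n ≤
      Real.exp ((k : ℝ) * ((∑ j ∈ Finset.Icc 1 m, r j * j) / (m * RR r m)) *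
        (Real.exp t - 1) - t * n / m) := by
  have hR := RR_pos r hr hm
  have hm0 : (0:ℝ) < m := by exact_mod_cast hm
  set l : ℝ := t / m with hl
  have hl0 : 0 ≤ l := div_nonneg ht hm0.le
  have h1 : tauTail r m k n
      = ∑ j ∈ Finset.range (k * m + 1), (if n ≤ j then tauP r m k j else 0) := by
    refine tsum_eq_sum fun j hj => ?_
    rw [Finset.mem_range, not_lt] at hj
    rw [tauP_eq_zero r hk (by omega)]; simp
  have h2 : tauTail r m k n ≤ Real.exp (-(l * n)) *
      ∑ j ∈ Finset.range (k * m + 1), tauP r m k j * Real.exp (l * j) := by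
    rw [h1, Finset.mul_sum]
    refine Finset.sum_le_sum fun j _ => ?_
    have hP := tauP_nonneg r hr m k j
    split_ifs with h
    · calc tauP r m k j = tauP r m k j * 1 := (mul_one _).symm
        _ ≤ tauP r m k j * Real.exp (l * j - l * n) := by
            refine mul_le_mul_of_nonneg_left ?_ hP
            refine Real.one_le_exp ?_
            have : (n:ℝ) ≤ (j:ℝ) := by exact_mod_cast h
            nlinarith
        _ = Real.exp (-(l * n)) * (tauP r m k j * Real.exp (l * j)) := by
            rw [sub_eq_add_neg, Real.exp_add]; ring
    · positivity
  have h3 : tauTail r m k n ≤ Real.exp (-(l * n)) *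
      ((RR r m)⁻¹ * ∑ j ∈ Finset.Icc 1 m, r j * Real.exp (l * j)) ^ k := by
    rw [← mgf_eq r m k hk l]; exact h2
  set Q : ℝ := (RR r m)⁻¹ * ∑ j ∈ Finset.Icc 1 m, r j * Real.exp (l * j) with hQdef
  set mu : ℝ := (∑ j ∈ Finset.Icc 1 m, r j * j) / (m * RR r m) with hmu
  have hQ0 : 0 ≤ Q :=
    mul_nonneg (inv_nonneg.2 hR.le)
      (Finset.sum_nonneg fun j _ => mul_nonneg (hr j).le (Real.exp_pos _).le)
  have hQle : Q ≤ 1 + (Real.exp t - 1) * mu := by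
    have hsum : ∑ j ∈ Finset.Icc 1 m, r j * Real.exp (l * j)
        ≤ ∑ j ∈ Finset.Icc 1 m, r j * (1 + (Real.exp t - 1) * (j / m)) := by
      refine Finset.sum_le_sum fun j hj => ?_
      obtain ⟨hj1, hj2⟩ := Finset.mem_Icc.1 hj
      refine mul_le_mul_of_nonneg_left ?_ (hr j).le
      have hx0 : (0:ℝ) ≤ (j:ℝ) / m := by positivity
      have hx1 : (j:ℝ) / m ≤ 1 := by
        rw [div_le_one hm0]; exact_mod_cast hj2
      have := exp_mul_le_aux (t := t) hx0 hx1
      calc Real.exp (l * j) = Real.exp (t * ((j:ℝ) / m)) := by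
            rw [hl]; ring_nf
        _ ≤ 1 + (Real.exp t - 1) * ((j:ℝ) / m) := this
    calc Q ≤ (RR r m)⁻¹ * ∑ j ∈ Finset.Icc 1 m, r j * (1 + (Real.exp t - 1) * (j / m)) := by
          exact mul_le_mul_of_nonneg_left hsum (inv_nonneg.2 hR.le)
      _ = 1 + (Real.exp t - 1) * mu := by
          have : ∑ j ∈ Finset.Icc 1 m, r j * (1 + (Real.exp t - 1) * (j / m))
              = RR r m + (Real.exp t - 1) / m * ∑ j ∈ Finset.Icc 1 m, r j * j := by
            rw [RR, Finset.mul_sum, ← Finset.sum_add_distrib]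
            refine Finset.sum_congr rfl fun j _ => ?_
            field_simp
          rw [this, hmu]
          field_simp
  have hQexp : Q ≤ Real.exp ((Real.exp t - 1) * mu) := by
    refine hQle.trans ?_
    have := Real.add_one_le_exp ((Real.exp t - 1) * mu)
    linarith
  have hpow : Q ^ k ≤ Real.exp ((k : ℝ) * ((Real.exp t - 1) * mu)) := by
    calc Q ^ k ≤ (Real.exp ((Real.exp t - 1) * mu)) ^ k := pow_le_pow_left₀ hQ0 hQexp k
      _ = Real.exp ((k : ℝ) * ((Real.exp t - 1) * mu)) := by
          rw [← Real.exp_nat_mul]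
  calc tauTail r m k n ≤ Real.exp (-(l * n)) * Q ^ k := h3
    _ ≤ Real.exp (-(l * n)) * Real.exp ((k : ℝ) * ((Real.exp t - 1) * mu)) := by
        exact mul_le_mul_of_nonneg_left hpow (Real.exp_pos _).le
    _ = Real.exp ((k : ℝ) * mu * (Real.exp t - 1) - t * n / m) := by
        rw [← Real.exp_add]
        congr 1
        rw [hl]
        ring

lemma lemA (a : ℝ) (ha : 0 < a) (r : ℕ → ℝ) (hr : ∀ n, 0 < r n)
    (hra : Tendsto (fun n : ℕ => (n : ℝ) * r n) atTop (nhds a)) :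
    ∃ B : ℝ, 0 < B ∧ ∀ j : ℕ, (j : ℝ) * r j ≤ B := by
  have hev : ∀ᶠ n : ℕ in atTop, (n : ℝ) * r n ≤ a + 1 :=
    hra.eventually (eventually_le_nhds (by linarith : a < a + 1))
  obtain ⟨N, hN⟩ := hev.exists_forall_of_atTop
  have hsum0 : 0 ≤ ∑ i ∈ Finset.range (N + 1), (i : ℝ) * r i :=
    Finset.sum_nonneg fun i _ => mul_nonneg (Nat.cast_nonneg i) (hr i).le
  refine ⟨(a + 1) + ∑ i ∈ Finset.range (N + 1), (i : ℝ) * r i, by linarith, fun j => ?_⟩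
  rcases le_or_gt j N with h | h
  · have h1 : (j : ℝ) * r j ≤ ∑ i ∈ Finset.range (N + 1), (i : ℝ) * r i :=
      Finset.single_le_sum (fun i _ => mul_nonneg (Nat.cast_nonneg i) (hr i).le)
        (Finset.mem_range.2 (by omega))
    linarith
  · have := hN j (by omega)
    linarith

lemma lemB (a : ℝ) (ha : 0 < a) (r : ℕ → ℝ) (hr : ∀ n, 0 < r n)
    (hra : Tendsto (fun n : ℕ => (n : ℝ) * r n) atTop (nhds a)) :
    ∃ c : ℝ, 0 < c ∧ ∀ m : ℕ, 1 ≤ m → c * (Real.log m + 1) ≤ RR r m := by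
  have hev : ∀ᶠ n : ℕ in atTop, a / 2 ≤ (n : ℝ) * r n :=
    hra.eventually (eventually_ge_nhds (by linarith : a / 2 < a))
  obtain ⟨N₀, hN₀⟩ := hev.exists_forall_of_atTop
  set N : ℕ := max N₀ 2 with hN
  have hN2 : 2 ≤ N := le_max_right _ _
  set K : ℝ := 1 + Real.log N with hK
  have hlogN0 : (0:ℝ) ≤ Real.log N :=
    Real.log_nonneg (by exact_mod_cast hN2.trans' one_le_two)
  have hK0 : 0 < K := by linarith
  -- key lower bound for m ≥ N
  have key : ∀ m : ℕ, N ≤ m → a / 2 * (Real.log (m + 1) - K) ≤ RR r m := by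
    intro m hm
    have h1m : 1 ≤ m := by omega
    have hsplit : ∑ j ∈ Finset.Icc 1 (N-1), (j:ℝ)⁻¹ + ∑ j ∈ Finset.Icc N m, (j:ℝ)⁻¹
        = ∑ j ∈ Finset.Icc 1 m, (j:ℝ)⁻¹ := by
      rw [← Finset.Ico_add_one_right_eq_Icc 1 (N-1), ← Finset.Ico_add_one_right_eq_Icc N m, ← Finset.Ico_add_one_right_eq_Icc 1 m]
      have hNN : N - 1 + 1 = N := by omega
      rw [hNN]
      exact Finset.sum_Ico_consecutive _ (by omega) (by omega)
    have hharm1 : Real.log ((m:ℝ) + 1) ≤ ∑ j ∈ Finset.Icc 1 m, (j:ℝ)⁻¹ := by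
      have := log_add_one_le_harmonic m
      rw [harmonic_eq_sum_Icc] at this
      push_cast at this
      exact this
    have hharm2 : ∑ j ∈ Finset.Icc 1 (N-1), (j:ℝ)⁻¹ ≤ K := by
      have h := harmonic_le_one_add_log (N-1)
      rw [harmonic_eq_sum_Icc] at h
      push_cast at h
      have h1 : (1:ℝ) ≤ ((N-1 : ℕ):ℝ) := by exact_mod_cast (by omega : 1 ≤ N - 1)
      have hlog : Real.log ((N - 1 : ℕ):ℝ) ≤ Real.log N :=
        Real.log_le_log (by linarith) (by exact_mod_cast Nat.sub_le N 1)
      rw [hK]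
      linarith
    have hinv : Real.log ((m:ℝ) + 1) - K ≤ ∑ j ∈ Finset.Icc N m, (j:ℝ)⁻¹ := by
      linarith
    have hterm : ∀ j ∈ Finset.Icc N m, a / 2 * (j:ℝ)⁻¹ ≤ r j := by
      intro j hj
      obtain ⟨hj1, _⟩ := Finset.mem_Icc.1 hj
      have hj0 : (0:ℝ) < j := by
        have : 2 ≤ j := hN2.trans hj1
        exact_mod_cast by omega
      have := hN₀ j (le_trans (le_max_left _ _) hj1)
      rw [mul_inv_le_iff₀ hj0] at *
      · nlinarith
    have hsub : ∑ j ∈ Finset.Icc N m, r j ≤ RR r m := by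
      refine Finset.sum_le_sum_of_subset_of_nonneg ?_ fun i _ _ => (hr i).le
      exact Finset.Icc_subset_Icc_left (by omega)
    calc a / 2 * (Real.log ((m:ℝ) + 1) - K) ≤ a / 2 * ∑ j ∈ Finset.Icc N m, (j:ℝ)⁻¹ := by
          exact mul_le_mul_of_nonneg_left hinv (by linarith)
      _ = ∑ j ∈ Finset.Icc N m, a / 2 * (j:ℝ)⁻¹ := Finset.mul_sum _ _ _
      _ ≤ ∑ j ∈ Finset.Icc N m, r j := Finset.sum_le_sum hterm
      _ ≤ RR r m := hsub
  -- threshold M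
  set M : ℕ := max N (⌈Real.exp (2 * K + 1)⌉₊ + 1) with hM
  have hM1 : 1 ≤ M := le_trans (by omega : 1 ≤ N) (le_max_left _ _)
  have hlogM0 : (0:ℝ) ≤ Real.log M :=
    Real.log_nonneg (by exact_mod_cast hM1)
  have hc2 : 0 < r 1 / (Real.log M + 1) := div_pos (hr 1) (by linarith)
  refine ⟨min (a / 4) (r 1 / (Real.log M + 1)), lt_min (by linarith) hc2, fun m hm => ?_⟩
  have hlogm0 : (0:ℝ) ≤ Real.log m := Real.log_nonneg (by exact_mod_cast hm)
  rcases le_or_gt M m with hMm | hMm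
  · -- large m
    have hNm : N ≤ m := le_trans (le_max_left _ _) hMm
    have hexp : Real.exp (2 * K + 1) ≤ (m:ℝ) := by
      calc Real.exp (2 * K + 1) ≤ (⌈Real.exp (2 * K + 1)⌉₊ : ℝ) := Nat.le_ceil _
        _ ≤ (m:ℝ) := by
            have : ⌈Real.exp (2 * K + 1)⌉₊ ≤ m := le_trans (by omega : _ ≤ M) hMm
            exact_mod_cast this
    have hlogm : 2 * K + 1 ≤ Real.log m := by
      have hm0 : (0:ℝ) < m := by exact_mod_cast hm
      exact (Real.le_log_iff_exp_le hm0).2 hexp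
    have hlog2 : (Real.log m + 1) / 2 ≤ Real.log ((m:ℝ) + 1) - K := by
      have : Real.log m ≤ Real.log ((m:ℝ) + 1) := by
        apply Real.log_le_log (by exact_mod_cast Nat.pos_of_ne_zero (by omega))
        linarith [ (by norm_num : (0:ℝ) ≤ 1) ]
      linarith
    have := key m hNm
    have hminle : min (a / 4) (r 1 / (Real.log M + 1)) ≤ a / 4 := min_le_left _ _
    nlinarith [hlogm0]
  · -- small m
    have hr1 : r 1 ≤ RR r m := by
      refine Finset.single_le_sum (f := r) (fun i _ => (hr i).le) ?_
      exact Finset.mem_Icc.2 ⟨le_refl 1, hm⟩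
    have hlogle : Real.log m ≤ Real.log M := by
      apply Real.log_le_log (by exact_mod_cast hm)
      exact_mod_cast hMm.le
    have hminle : min (a / 4) (r 1 / (Real.log M + 1)) ≤ r 1 / (Real.log M + 1) :=
      min_le_right _ _
    have h1 : min (a / 4) (r 1 / (Real.log M + 1)) * (Real.log m + 1)
        ≤ r 1 / (Real.log M + 1) * (Real.log M + 1) := by
      apply mul_le_mul hminle (by linarith) (by linarith) hc2.le
    rw [div_mul_cancel₀] at h1
    · linarith
    · linarith

/-- Lemma 6.3 (Fuk–Nagaev type inequality): there is `C ∈ (1,∞)` with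
`P(τ_k^{(m)} ≥ n) ≤ (min(Ckm/(n(log m + 1)), 1))^{n/m}` for all `m, n, k ∈ ℕ`. -/
theorem fuk_nagaev_upper_tail
    (a : ℝ) (ha : 0 < a) (r : ℕ → ℝ) (hr : ∀ n, 0 < r n)
    (hra : Tendsto (fun n : ℕ => (n : ℝ) * r n) atTop (nhds a)) :
    ∃ C : ℝ, 1 < C ∧ ∀ m n k : ℕ, 1 ≤ m → 1 ≤ n → 1 ≤ k →
      tauTail r m k n ≤
        (min (C * k * m / (n * (Real.log m + 1))) 1) ^ ((n : ℝ) / (m : ℝ)) := by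
  obtain ⟨B, hB0, hB⟩ := lemA a ha r hr hra
  obtain ⟨c, hc0, hc⟩ := lemB a ha r hr hra
  set C : ℝ := max (Real.exp 1 * B / c) 2 with hC
  have hC2 : (2:ℝ) ≤ C := le_max_right _ _
  refine ⟨C, by linarith, fun m n k hm hn hk => ?_⟩
  have hm0 : (0:ℝ) < m := by exact_mod_cast hm
  have hn0 : (0:ℝ) < n := by exact_mod_cast hn
  have hk0 : (0:ℝ) < k := by exact_mod_cast hk
  have hR := RR_pos r hr hm
  set L : ℝ := Real.log m + 1 with hL
  have hL1 : (1:ℝ) ≤ L := by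
    have : (0:ℝ) ≤ Real.log m := Real.log_nonneg (by exact_mod_cast hm)
    linarith
  have hL0 : (0:ℝ) < L := by linarith
  set mu : ℝ := (∑ j ∈ Finset.Icc 1 m, r j * j) / (m * RR r m) with hmu
  set x : ℝ := C * k * m / (n * L) with hx
  have hx0 : 0 < x := by
    apply div_pos (by positivity) (by positivity)
  set nu : ℝ := (n : ℝ) / m with hnu
  have hnu0 : 0 < nu := div_pos hn0 hm0
  -- mu bounds
  have hsumjr : ∑ j ∈ Finset.Icc 1 m, r j * j ≤ B * m := by
    calc ∑ j ∈ Finset.Icc 1 m, r j * j ≤ ∑ _j ∈ Finset.Icc 1 m, B :=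
          Finset.sum_le_sum fun j _ => by
            have := hB j; nlinarith [this]
      _ = B * m := by
          rw [Finset.sum_const, Nat.card_Icc]
          simp [mul_comm]
  have hmupos : 0 < mu := by
    apply div_pos ?_ (by positivity)
    refine Finset.sum_pos (fun j hj => ?_) ⟨1, Finset.mem_Icc.2 ⟨le_refl 1, hm⟩⟩
    have := (Finset.mem_Icc.1 hj).1
    have : (0:ℝ) < j := by exact_mod_cast by omega
    nlinarith [hr j]
  have hmule : mu ≤ B / (c * L) := by
    have hRcL : c * L ≤ RR r m := hc m hm
    calc mu ≤ (B * m) / (m * (c * L)) := by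
          apply div_le_div₀ (by positivity) hsumjr (by positivity)
          exact mul_le_mul_of_nonneg_left hRcL hm0.le
      _ = B / (c * L) := by
          field_simp
  set mutot : ℝ := (k : ℝ) * mu with hmutot
  have hmutot0 : 0 < mutot := by positivity
  have keyx : Real.exp 1 * mutot ≤ x * nu := by
    have h1 : Real.exp 1 * B / c ≤ C := le_max_left _ _
    have h2 : Real.exp 1 * mu ≤ Real.exp 1 * (B / (c * L)) :=
      mul_le_mul_of_nonneg_left hmule (Real.exp_pos 1).le
    have h3 : Real.exp 1 * (B / (c * L)) ≤ C / L := by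
      have he : Real.exp 1 * (B / (c * L)) = (Real.exp 1 * B / c) / L := by
        field_simp
      rw [he]
      gcongr
    have h4 : x * nu = C * k / L := by
      rw [hx, hnu]; field_simp
    rw [h4, hmutot]
    calc Real.exp 1 * ((k:ℝ) * mu) = (k:ℝ) * (Real.exp 1 * mu) := by ring
      _ ≤ (k:ℝ) * (C / L) := by
          refine mul_le_mul_of_nonneg_left (h2.trans h3) hk0.le
      _ = C * k / L := by ring
  rcases le_or_gt 1 x with hx1 | hx1
  · -- trivial case
    rw [min_eq_right hx1, Real.one_rpow]
    have := chernoff r hr m k n hm (by omega) 0 le_rfl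
    simpa using this
  · -- Chernoff case
    rw [min_eq_left hx1.le]
    set t : ℝ := Real.log (nu / mutot) with ht
    have hratio : Real.exp 1 < nu / mutot := by
      rw [lt_div_iff₀ hmutot0]
      nlinarith [keyx, hnu0, hmutot0]
    have ht0 : 0 ≤ t := by
      rw [ht]
      apply Real.log_nonneg
      have h1e : (1:ℝ) ≤ Real.exp 1 := by
        have := Real.add_one_le_exp (1:ℝ); linarith
      linarith [hratio]
    have hexpt : Real.exp t = nu / mutot := by
      rw [ht, Real.exp_log (by positivity)]
    have hbound := chernoff r hr m k n hm (by omega) t ht0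
    refine hbound.trans ?_
    rw [Real.rpow_def_of_pos hx0]
    apply Real.exp_le_exp.2
    -- exponent inequality
    have hlogx : 1 - t ≤ Real.log x := by
      have hle : Real.exp 1 * mutot / nu ≤ x := by
        rw [div_le_iff₀ hnu0]; exact keyx
      have hlog := Real.log_le_log (by positivity) hle
      rw [Real.log_div (by positivity) (ne_of_gt hnu0),
        Real.log_mul (Real.exp_ne_zero 1) (ne_of_gt hmutot0), Real.log_exp] at hlog
      have htval : t = Real.log nu - Real.log mutot := by
        rw [ht, Real.log_div (ne_of_gt hnu0) (ne_of_gt hmutot0)]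
      linarith
    have hexp_eq : (k:ℝ) * mu * (Real.exp t - 1) = nu - mutot := by
      rw [hexpt, hmutot]
      field_simp
    have htn : t * (n:ℝ) / (m:ℝ) = t * nu := by
      rw [hnu]; ring
    rw [hexp_eq, htn]
    calc nu - mutot - t * nu ≤ nu * (1 - t) := by linarith [hmutot0]
      _ ≤ nu * Real.log x := by
          exact mul_le_mul_of_nonneg_left hlogx hnu0.le
      _ = Real.log x * nu := by ring
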